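/- Every z ∈ ker A* lies in L^∞(Ω), with ‖z‖_{L^∞} ≤ (‖σ‖_{L^∞}/δ) ‖z‖_{L²}. -/

import Mathlib

open MeasureTheory

theorem ker_adjoint_Linfty_bound (d : ℕ) (Ω : Set (Fin d → ℝ))
    (hΩo : IsOpen Ω) (hΩb : Bornology.IsBounded Ω)
    (μ : Measure (Fin d → ℝ)) (hμ : μ = volume.restrict Ω)
    (hprob : μ Set.univ = 1)
    (σ : (Fin d → ℝ) → (Fin d → ℝ) → ℝ)
    (hσmeas : Measurable (Function.uncurry σ))
    (hσnonneg : ∀ x xs, 0 ≤ σ x xs)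
    (C : ℝ) (hσbd : ∀ x xs, σ x xs ≤ C)
    (S : (Fin d → ℝ) → ℝ) (hS : ∀ᵐ x ∂μ, S x = ∫ xs, σ x xs ∂μ)
    (δ : ℝ) (hδ : 0 < δ) (hSδ : ∀ᵐ x ∂μ, δ ≤ S x)
    (z : Lp ℝ 2 μ)
    (hz : ∀ᵐ x ∂μ, S x * z x = ∫ xs, σ xs x * z xs ∂μ) :
    ∀ᵐ x ∂μ, |z x| ≤ (C / δ) * ‖z‖ := by
  haveI : IsProbabilityMeasure μ := ⟨hprob⟩
  have hz2 : MemLp (z : (Fin d → ℝ) → ℝ) 2 μ := Lp.memLp z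
  have hz1 : Integrable (z : (Fin d → ℝ) → ℝ) μ := hz2.integrable (by norm_num)
  have hC : 0 ≤ C := le_trans (hσnonneg 0 0) (hσbd 0 0)
  -- ∫ ‖z‖ ≤ ‖z‖ (L² norm)
  have hL1L2 : ∫ xs, ‖z xs‖ ∂μ ≤ ‖z‖ := by
    have h1 : ∫ xs, ‖z xs‖ ∂μ = (eLpNorm (z : (Fin d → ℝ) → ℝ) 1 μ).toReal := by
      rw [integral_norm_eq_lintegral_enorm hz1.aestronglyMeasurable,
        eLpNorm_one_eq_lintegral_enorm]
    have h2 : eLpNorm (z : (Fin d → ℝ) → ℝ) 1 μ ≤ eLpNorm (z : (Fin d → ℝ) → ℝ) 2 μ :=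
      eLpNorm_le_eLpNorm_of_exponent_le (by norm_num) hz2.aestronglyMeasurable
    rw [h1, Lp.norm_def]
    exact ENNReal.toReal_mono hz2.2.ne h2
  filter_upwards [hz, hSδ] with x hx hδx
  have hSpos : 0 < S x := lt_of_lt_of_le hδ hδx
  have hint : ‖∫ xs, σ xs x * z xs ∂μ‖ ≤ C * ‖z‖ := by
    calc ‖∫ xs, σ xs x * z xs ∂μ‖ ≤ ∫ xs, ‖σ xs x * z xs‖ ∂μ :=
          norm_integral_le_integral_norm _
      _ ≤ ∫ xs, C * ‖z xs‖ ∂μ := by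
          refine integral_mono_of_nonneg (Filter.Eventually.of_forall fun xs => norm_nonneg _)
            (hz1.norm.const_mul C) (Filter.Eventually.of_forall fun xs => ?_)
          simp only [norm_mul]
          exact mul_le_mul_of_nonneg_right
            (le_trans (le_of_eq (Real.norm_of_nonneg (hσnonneg xs x))) (hσbd xs x))
            (norm_nonneg _)
      _ = C * ∫ xs, ‖z xs‖ ∂μ := integral_const_mul _ _
      _ ≤ C * ‖z‖ := mul_le_mul_of_nonneg_left hL1L2 hC
  have key : S x * |z x| ≤ C * ‖z‖ := by
    calc S x * |z x| = |S x * z x| := by rw [abs_mul, abs_of_pos hSpos]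
      _ ≤ C * ‖z‖ := by rw [hx, ← Real.norm_eq_abs]; exact hint
  have : δ * |z x| ≤ C * ‖z‖ :=
    le_trans (mul_le_mul_of_nonneg_right hδx (abs_nonneg _)) key
  rw [div_mul_eq_mul_div, le_div_iff₀ hδ]
  linarith
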